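/- Let TS=(S,T,→,s₀) be a CEST-system and N=(P,T⊎T̄,F,M₀) a PT-net such that (TS^spike)^rev ◁ CRG_N ◁ TS^mixrev and TS ≅ CRG_{N|_T}, where N|_T is the subnet of N induced by the actions T. Then TS^mixrev is solvable. -/

import Mathlib

/-! Common formalization of step transition systems, CEST-systems,
reversing constructions, PT-nets, and solvability. -/

structure STS (S : Type*) (A : Type*) where
  T : Finset A
  tr : S → Multiset A → S → Prop
  init : S

namespace STS

variable {S S' : Type*} {A : Type*}

/-- All transition labels are multisets over the action set `T`. -/
def LabelsIn (X : STS S A) : Prop :=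
  ∀ s (α : Multiset A) s', X.tr s α s' → ∀ a ∈ α, a ∈ X.T

/-- The integer action vector of a step. -/
def stepVec [DecidableEq A] (α : Multiset A) : A → ℤ :=
  fun a => (α.count a : ℤ)

/-- `PathSig X s r v` holds iff there is an undirected path from `s` to `r`
with signature `v`. -/
inductive PathSig [DecidableEq A] (X : STS S A) : S → S → (A → ℤ) → Prop
  | nil (s : S) : PathSig X s s 0
  | fwd {s r r' : S} {α : Multiset A} {v : A → ℤ} :
      PathSig X s r v → X.tr r α r' → PathSig X s r' (v + stepVec α)
  | bwd {s r r' : S} {α : Multiset A} {v : A → ℤ} :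
      PathSig X s r v → X.tr r' α r → PathSig X s r' (v - stepVec α)

/-- The least addition-closed equivalence relating signatures of any two
undirected paths with the same source and target. -/
inductive Bowtie [DecidableEq A] (X : STS S A) : (A → ℤ) → (A → ℤ) → Prop
  | base {s r : S} {v w : A → ℤ} :
      PathSig X s r v → PathSig X s r w → Bowtie X v w
  | refl (v : A → ℤ) : Bowtie X v v
  | symm {v w : A → ℤ} : Bowtie X v w → Bowtie X w v
  | trans {u v w : A → ℤ} : Bowtie X u v → Bowtie X v w → Bowtie X u w
  | add {v w v' w' : A → ℤ} :
      Bowtie X v w → Bowtie X v' w' → Bowtie X (v + v') (w + w')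

/-- Constant effect. -/
def CE [DecidableEq A] (X : STS S A) : Prop :=
  ∀ (s r r' : S) (v w : A → ℤ),
    PathSig X s r v → PathSig X s r' w → Bowtie X v w → r = r'

/-- Reachability by forward transitions. -/
inductive ReachFrom (X : STS S A) : S → S → Prop
  | refl (s : S) : ReachFrom X s s
  | step {s r r' : S} {α : Multiset A} :
      ReachFrom X s r → X.tr r α r' → ReachFrom X s r'

/-- Every state is reachable from the initial state. -/
def REA (X : STS S A) : Prop := ∀ s, X.ReachFrom X.init s

/-- Empty loops. -/
def EL (X : STS S A) : Prop := ∀ s, X.tr s 0 s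

/-- Sequentialisability. -/
def SEQ (X : STS S A) : Prop :=
  ∀ (s : S) (α β : Multiset A), (∃ s', X.tr s (α + β) s') →
    ∃ s', X.tr s α s' ∧ ∃ s'', X.tr s' β s''

/-- A CEST-system: a step transition system satisfying CE, REA, EL and SEQ. -/
def IsCEST [DecidableEq A] (X : STS S A) : Prop :=
  X.LabelsIn ∧ X.CE ∧ X.REA ∧ X.EL ∧ X.SEQ

/-- Step-finiteness: at every state only finitely many steps are enabled. -/
def StepFinite (X : STS S A) : Prop :=
  ∀ s, {α : Multiset A | ∃ s', X.tr s α s'}.Finite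

/-- Retain only transitions whose label has size at most 1. -/
def seqR (X : STS S A) : STS S A :=
  { X with tr := fun s α s' => X.tr s α s' ∧ Multiset.card α ≤ 1 }

/-- Retain only transitions whose label is a set. -/
def setR (X : STS S A) : STS S A :=
  { X with tr := fun s α s' => X.tr s α s' ∧ α.Nodup }

/-- Retain only transitions whose label has support of size at most 1. -/
def spikeR [DecidableEq A] (X : STS S A) : STS S A :=
  { X with tr := fun s α s' => X.tr s α s' ∧ α.toFinset.card ≤ 1 }

variable [DecidableEq A]

/-- `bar` is a proper reversing map for the actions of `X`: reverses are
pairwise distinct and fresh. -/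
def GoodRev (X : STS S A) (bar : A → A) : Prop :=
  Set.InjOn bar ↑X.T ∧ ∀ a ∈ X.T, bar a ∉ X.T

/-- The action set `T ⊎ T̄`. -/
def revT (X : STS S A) (bar : A → A) : Finset A := X.T ∪ X.T.image bar

/-- The direct reverse `TS^rev` (in a CEST-system, `s –α→ s'` means `s' = s⊕α`). -/
def revSTS (X : STS S A) (bar : A → A) : STS S A where
  T := revT X bar
  tr s γ s' := X.tr s γ s' ∨ ∃ α : Multiset A, γ = Multiset.map bar α ∧ X.tr s' α s
  init := X.init

/-- The set reverse `TS^setrev`. -/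
def setrevSTS (X : STS S A) (bar : A → A) : STS S A where
  T := revT X bar
  tr s γ s' := X.tr s γ s' ∨
    ∃ α : Multiset A, γ = Multiset.map bar α ∧ α.Nodup ∧ X.tr s' α s
  init := X.init

/-- The mixed reverse `TS^mixrev`: transitions `(s⊕α, ᾱ+β, s⊕β)` for `s –(α+β)→`. -/
def mixrevSTS (X : STS S A) (bar : A → A) : STS S A where
  T := revT X bar
  tr u γ v := ∃ (s : S) (α β : Multiset A),
      γ = Multiset.map bar α + β ∧ (∃ w, X.tr s (α + β) w) ∧
      X.tr s α u ∧ X.tr s β v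
  init := X.init

/-- `Y` is a split reverse of `X` (w.r.t. reversing map `bar` and the
index-removing map `noidx`). -/
def IsSplitRev (X : STS S A) (bar noidx : A → A) (Y : STS S A) : Prop :=
  Y.init = X.init ∧
  Y.LabelsIn ∧
  X.T ⊆ Y.T ∧
  (∀ a ∈ X.T, noidx a = a) ∧
  Disjoint X.T ((Y.T \ X.T).image noidx) ∧
  Y.SEQ ∧
  Y.T.image noidx = revT X bar ∧
  ∀ (s : S) (γ : Multiset A) (s' : S),
    (∃ δ : Multiset A, Y.tr s δ s' ∧ γ = Multiset.map noidx δ) ↔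
      (revSTS X bar).tr s γ s'

/-- Inclusion with the identity map on states (`⊴`). -/
def SubId (X Y : STS S A) : Prop :=
  X.init = Y.init ∧ X.T ⊆ Y.T ∧
  ∀ s (α : Multiset A) s', X.tr s α s' → Y.tr s α s'

/-- Inclusion (`◁`) via a bijection of states. -/
def Incl (X : STS S A) (Y : STS S' A) : Prop :=
  ∃ ψ : S ≃ S', ψ X.init = Y.init ∧ X.T ⊆ Y.T ∧
    ∀ s (α : Multiset A) s', X.tr s α s' → Y.tr (ψ s) α (ψ s')

/-- Isomorphism of step transition systems. -/
def IsoSTS (X : STS S A) (Y : STS S' A) : Prop :=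
  ∃ ψ : S ≃ S', ψ X.init = Y.init ∧ X.T = Y.T ∧
    ∀ s (α : Multiset A) s', X.tr s α s' ↔ Y.tr (ψ s) α (ψ s')

/-- `TS̄_r`: the reversed system restricted to the states from which `r` is
reachable in `X`, with initial state `r`. -/
def revRestrict (X : STS S A) (bar : A → A) (r : S) :
    STS {s : S // X.ReachFrom s r} A where
  T := X.T.image bar
  tr u γ v := ∃ α : Multiset A, γ = Multiset.map bar α ∧ X.tr v.1 α u.1
  init := ⟨r, ReachFrom.refl r⟩

end STS

/-- A place/transition net. -/
structure PTNet (P : Type*) (A : Type*) where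
  T : Finset A
  pre : P → A → ℕ
  post : A → P → ℕ
  M0 : P → ℕ
  pre_pos : ∀ a ∈ T, ∃ p, 0 < pre p a

namespace PTNet

variable {P A : Type*}

def PRE (N : PTNet P A) (α : Multiset A) (p : P) : ℕ :=
  (α.map fun a => N.pre p a).sum

def POST (N : PTNet P A) (α : Multiset A) (p : P) : ℕ :=
  (α.map fun a => N.post a p).sum

def Enabled (N : PTNet P A) (M : P → ℕ) (α : Multiset A) : Prop :=
  (∀ a ∈ α, a ∈ N.T) ∧ ∀ p, N.PRE α p ≤ M p

def fire (N : PTNet P A) (M : P → ℕ) (α : Multiset A) : P → ℕ :=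
  fun p => M p - N.PRE α p + N.POST α p

inductive Reach (N : PTNet P A) : (P → ℕ) → Prop
  | init : Reach N N.M0
  | step {M : P → ℕ} {α : Multiset A} :
      Reach N M → N.Enabled M α → Reach N (N.fire M α)

/-- The subnet induced by a set of actions (same places, same marking). -/
def restrict [DecidableEq A] (N : PTNet P A) (T' : Finset A) : PTNet P A where
  T := N.T ∩ T'
  pre := N.pre
  post := N.post
  M0 := N.M0
  pre_pos := fun a ha => N.pre_pos a (Finset.mem_of_mem_inter_left ha)

end PTNet

/-- The concurrent reachability graph of a PT-net. -/
def CRG {P A : Type*} (N : PTNet P A) : STS {M : P → ℕ // N.Reach M} A where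
  T := N.T
  tr M α M' := N.Enabled M.1 α ∧ M'.1 = N.fire M.1 α
  init := ⟨N.M0, PTNet.Reach.init⟩

/-- A step transition system is solvable if it is isomorphic to the
concurrent reachability graph of some PT-net. -/
def STSSolvable {S A : Type*} (X : STS S A) : Prop :=
  ∃ (n : ℕ) (N : PTNet (Fin n) A), STS.IsoSTS X (CRG N)

/-- An unmarked PT-net. -/
structure UPTNet (P : Type*) (A : Type*) where
  T : Finset A
  pre : P → A → ℕ
  post : A → P → ℕ
  pre_pos : ∀ a ∈ T, ∃ p, 0 < pre p a

def UPTNet.withM {P A : Type*} (U : UPTNet P A) (M : P → ℕ) : PTNet P A :=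
  ⟨U.T, U.pre, U.post, M, U.pre_pos⟩

/-- Solvability of the reversed system `TS̄` with multiple initial states `R`:
one unmarked PT-net and one map `ψ` solving each `TS̄_r` via `ψ(r)` as the
initial marking. -/
def RevMultiSolvable {S A : Type*} [DecidableEq A] (X : STS S A) (bar : A → A)
    (R : Set S) : Prop :=
  ∃ (n : ℕ) (U : UPTNet (Fin n) A) (ψ : S → Fin n → ℕ),
    ∀ r ∈ R,
      ∃ e : {s : S // X.ReachFrom s r} ≃
              {M : Fin n → ℕ // (U.withM (ψ r)).Reach M},
        (∀ s, (e s).1 = ψ s.1) ∧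
        (X.revRestrict bar r).T = (CRG (U.withM (ψ r))).T ∧
        ∀ s (α : Multiset A) s',
          (X.revRestrict bar r).tr s α s' ↔ (CRG (U.withM (ψ r))).tr (e s) α (e s')

/-- A PT-net with weighted read arcs. -/
structure PTRNet (P : Type*) (A : Type*) where
  T : Finset A
  pre : P → A → ℕ
  post : A → P → ℕ
  read : P → A → Option ℕ
  M0 : P → ℕ
  pre_pos : ∀ a ∈ T, ∃ p, 0 < pre p a

namespace PTRNet

variable {P A : Type*}

def toPTNet (N : PTRNet P A) : PTNet P A := ⟨N.T, N.pre, N.post, N.M0, N.pre_pos⟩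

def Enabled (N : PTRNet P A) (M : P → ℕ) (α : Multiset A) : Prop :=
  N.toPTNet.Enabled M α ∧ ∀ a ∈ α, ∀ p k, N.read p a = some k → M p = k

inductive Reach (N : PTRNet P A) : (P → ℕ) → Prop
  | init : Reach N N.M0
  | step {M : P → ℕ} {α : Multiset A} :
      Reach N M → N.Enabled M α → Reach N (N.toPTNet.fire M α)

end PTRNet

/-- The concurrent reachability graph of a PTR-net. -/
def PTRCRG {P A : Type*} (N : PTRNet P A) : STS {M : P → ℕ // N.Reach M} A where
  T := N.T
  tr M α M' := N.Enabled M.1 α ∧ M'.1 = N.toPTNet.fire M.1 α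
  init := ⟨N.M0, PTRNet.Reach.init⟩
/-! ### Auxiliary development for stmt15 -/

open STS

/-- Bundled context for the proof of `stmt15`. -/
structure Aux15 (S A : Type*) [DecidableEq A] where
  X : STS S A
  bar : A → A
  n : ℕ
  N : PTNet (Fin n) A
  hX : X.IsCEST
  hg : X.GoodRev bar
  hT : N.T = X.revT bar
  ψ1 : S ≃ {M : Fin n → ℕ // N.Reach M}
  hψ1i : ψ1 ((X.spikeR.revSTS bar).init) = (CRG N).init
  hψ1tr : ∀ s (α : Multiset A) s', (X.spikeR.revSTS bar).tr s α s' →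
    (CRG N).tr (ψ1 s) α (ψ1 s')
  ψ2 : {M : Fin n → ℕ // N.Reach M} ≃ S
  hψ2tr : ∀ s (α : Multiset A) s', (CRG N).tr s α s' →
    (X.mixrevSTS bar).tr (ψ2 s) α (ψ2 s')
  hψ2i : ψ2 ((CRG N).init) = (X.mixrevSTS bar).init
  ψ3 : S ≃ {M : Fin n → ℕ // (N.restrict X.T).Reach M}
  hψ3i : ψ3 X.init = (CRG (N.restrict X.T)).init
  hψ3tr : ∀ s (α : Multiset A) s', X.tr s α s' ↔
    (CRG (N.restrict X.T)).tr (ψ3 s) α (ψ3 s')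

namespace Aux15

variable {S A : Type*} [DecidableEq A] (C : Aux15 S A)

/-- The canonical marking of a state. -/
def Mk (s : S) : Fin C.n → ℕ := (C.ψ1 s).1

/-- The marking via `ψ3`. -/
def Mk3 (s : S) : Fin C.n → ℕ := (C.ψ3 s).1

lemma hLab : C.X.LabelsIn := C.hX.1
lemma hCE : C.X.CE := C.hX.2.1
lemma hREA : C.X.REA := C.hX.2.2.1
lemma hEL : C.X.EL := C.hX.2.2.2.1
lemma hSEQ : C.X.SEQ := C.hX.2.2.2.2

lemma stepVec_zero : stepVec (0 : Multiset A) = (0 : A → ℤ) := by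
  funext a; simp [stepVec]

lemma stepVec_add (α β : Multiset A) :
    stepVec (α + β) = stepVec α + stepVec β := by
  funext a; simp [stepVec]

/-- Forward determinism. -/
lemma det {s t t' : S} {α : Multiset A} (h : C.X.tr s α t) (h' : C.X.tr s α t') :
    t = t' := by
  have p1 : PathSig C.X s t (0 + stepVec α) := PathSig.fwd (PathSig.nil s) h
  have p2 : PathSig C.X s t' (0 + stepVec α) := PathSig.fwd (PathSig.nil s) h'
  exact C.hCE s t t' _ _ p1 p2 (Bowtie.refl _)

/-- Zero-step determinism. -/
lemma zero_det {t r : S} (h : C.X.tr t 0 r) : r = t := by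
  have p1 : PathSig C.X t r (0 + stepVec (0 : Multiset A)) :=
    PathSig.fwd (PathSig.nil t) h
  have e : (0 + stepVec (0 : Multiset A)) = (0 : A → ℤ) := by
    rw [stepVec_zero]; simp
  rw [e] at p1
  exact C.hCE t r t _ _ p1 (PathSig.nil t) (Bowtie.refl _)

/-- Composition of two steps is determined. -/
lemma tr_tr_det {s t t2 w : S} {γ1 γ2 : Multiset A}
    (h : C.X.tr s (γ1 + γ2) w) (h1 : C.X.tr s γ1 t) (h2 : C.X.tr t γ2 t2) :
    t2 = w := by
  have p1 : PathSig C.X s w (0 + stepVec (γ1 + γ2)) := PathSig.fwd (PathSig.nil s) h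
  have p2 : PathSig C.X s t2 ((0 + stepVec γ1) + stepVec γ2) :=
    PathSig.fwd (PathSig.fwd (PathSig.nil s) h1) h2
  have e : ((0 + stepVec γ1) + stepVec γ2) = (0 + stepVec (γ1 + γ2)) := by
    rw [stepVec_add]; ring
  rw [e] at p2
  exact (C.hCE s w t2 _ _ p1 p2 (Bowtie.refl _)).symm

/-- Split a step with matching endpoints. -/
lemma split {s w : S} {γ1 γ2 : Multiset A} (h : C.X.tr s (γ1 + γ2) w) :
    ∃ t, C.X.tr s γ1 t ∧ C.X.tr t γ2 w := by
  obtain ⟨t, ht, t2, ht2⟩ := C.hSEQ s γ1 γ2 ⟨w, h⟩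
  exact ⟨t, ht, (C.tr_tr_det h ht ht2) ▸ ht2⟩

/-- Every action of a step occurs as a singleton step somewhere. -/
lemma occurs {α : Multiset A} : ∀ {s u : S}, C.X.tr s α u →
    ∀ a ∈ α, ∃ t t', C.X.tr t {a} t' := by
  induction α using Multiset.induction with
  | empty => intro s u _ a ha; simp at ha
  | cons b α₀ ih =>
    intro s u h a ha
    have h' : C.X.tr s ({b} + α₀) u := by rwa [Multiset.singleton_add]
    obtain ⟨t, ht, htu⟩ := C.split h'
    rcases Multiset.mem_cons.1 ha with rfl | ha₀
    · exact ⟨s, t, ht⟩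
    · exact ih htu a ha₀

/-- Singleton-step reachability upgrades across any step. -/
lemma sreach_step {α : Multiset A} : ∀ {t t' : S}, C.X.tr t α t' →
    (C.X.seqR).ReachFrom C.X.init t → (C.X.seqR).ReachFrom C.X.init t' := by
  induction α using Multiset.induction with
  | empty =>
    intro t t' h hr
    rwa [C.zero_det h]
  | cons b α₀ ih =>
    intro t t' h hr
    have h' : C.X.tr t ({b} + α₀) t' := by rwa [Multiset.singleton_add]
    obtain ⟨t1, ht1, ht1'⟩ := C.split h'
    have hr1 : (C.X.seqR).ReachFrom C.X.init t1 :=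
      ReachFrom.step hr ⟨ht1, by simp⟩
    exact ih ht1' hr1

/-- Every state is singleton-reachable. -/
lemma sreach_all (s : S) : (C.X.seqR).ReachFrom C.X.init s := by
  have h := C.hREA s
  induction h with
  | refl => exact ReachFrom.refl _
  | step hr htr ih => exact C.sreach_step htr ih

end Aux15

namespace Aux15

variable {S A : Type*} [DecidableEq A] (C : Aux15 S A)

lemma PRE_singleton (a : A) (p : Fin C.n) : C.N.PRE {a} p = C.N.pre p a := by
  simp [PTNet.PRE]

lemma POST_singleton (a : A) (p : Fin C.n) : C.N.POST {a} p = C.N.post a p := by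
  simp [PTNet.POST]

lemma PRE_add (α β : Multiset A) (p : Fin C.n) :
    C.N.PRE (α + β) p = C.N.PRE α p + C.N.PRE β p := by
  simp [PTNet.PRE]

lemma POST_add (α β : Multiset A) (p : Fin C.n) :
    C.N.POST (α + β) p = C.N.POST α p + C.N.POST β p := by
  simp [PTNet.POST]

lemma restrict_PRE (γ : Multiset A) :
    (C.N.restrict C.X.T).PRE γ = C.N.PRE γ := rfl

lemma restrict_POST (γ : Multiset A) :
    (C.N.restrict C.X.T).POST γ = C.N.POST γ := rfl

lemma T_sub_revT : C.X.T ⊆ C.X.revT C.bar := Finset.subset_union_left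

lemma bar_mem_revT {a : A} (ha : a ∈ C.X.T) : C.bar a ∈ C.X.revT C.bar :=
  Finset.mem_union_right _ (Finset.mem_image_of_mem _ ha)

lemma Mk_init : C.Mk C.X.init = C.N.M0 := by
  have := congrArg Subtype.val C.hψ1i
  exact this

lemma Mk3_init : C.Mk3 C.X.init = C.N.M0 := by
  have := congrArg Subtype.val C.hψ3i
  exact this

/-- Forward singleton transitions are in `CRG N` (via h1). -/
lemma single_fire_Mk {s s' : S} {a : A} (h : C.X.tr s {a} s') :
    (∀ p, C.N.pre p a ≤ C.Mk s p) ∧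
      ∀ p, C.Mk s' p = C.Mk s p - C.N.pre p a + C.N.post a p := by
  have hs : (C.X.spikeR.revSTS C.bar).tr s {a} s' := by
    left; exact ⟨h, by simp⟩
  have hc := C.hψ1tr s {a} s' hs
  obtain ⟨⟨_, hpre⟩, hfir⟩ := hc
  constructor
  · intro p; have := hpre p; rwa [C.PRE_singleton] at this
  · intro p
    have := congrFun hfir p
    simpa [PTNet.fire, C.PRE_singleton, C.POST_singleton, Mk] using this

/-- Forward singleton transitions via h3. -/
lemma single_fire_Mk3 {s s' : S} {a : A} (h : C.X.tr s {a} s') :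
    (∀ p, C.N.pre p a ≤ C.Mk3 s p) ∧
      ∀ p, C.Mk3 s' p = C.Mk3 s p - C.N.pre p a + C.N.post a p := by
  have hc := (C.hψ3tr s {a} s').1 h
  obtain ⟨⟨_, hpre⟩, hfir⟩ := hc
  constructor
  · intro p; have := hpre p
    rwa [C.restrict_PRE, C.PRE_singleton] at this
  · intro p
    have := congrFun hfir p
    simpa [PTNet.fire, C.restrict_PRE, C.restrict_POST, C.PRE_singleton,
      C.POST_singleton, Mk3] using this

/-- The two marking maps agree. -/
lemma MkEq (s : S) : C.Mk s = C.Mk3 s := by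
  have h := C.sreach_all s
  induction h with
  | refl => rw [C.Mk_init, C.Mk3_init]
  | @step t t' α hr htr ih =>
    obtain ⟨htr', hcard⟩ := htr
    interval_cases h : Multiset.card α
    · rw [Multiset.card_eq_zero] at h; subst h
      rwa [C.zero_det htr']
    · rw [Multiset.card_eq_one] at h; obtain ⟨a, rfl⟩ := h
      funext p
      rw [(C.single_fire_Mk htr').2 p, (C.single_fire_Mk3 htr').2 p, ih]

lemma Mk_inj {s s' : S} (h : ∀ p, C.Mk s p = C.Mk s' p) : s = s' := by
  have h3 : C.ψ3 s = C.ψ3 s' := by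
    apply Subtype.ext
    funext p
    have := h p
    rwa [congrFun (C.MkEq s) p, congrFun (C.MkEq s') p] at this
  exact C.ψ3.injective h3

/-- h3 forward: markings and enabling of any step of `X`. -/
lemma FWD {s s' : S} {γ : Multiset A} (h : C.X.tr s γ s') :
    (∀ a ∈ γ, a ∈ C.X.T) ∧ (∀ p, C.N.PRE γ p ≤ C.Mk s p) ∧
      ∀ p, C.Mk s' p = C.Mk s p - C.N.PRE γ p + C.N.POST γ p := by
  have hc := (C.hψ3tr s γ s').1 h
  obtain ⟨⟨hlab, hpre⟩, hfir⟩ := hc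
  refine ⟨C.hLab s γ s' h, ?_, ?_⟩
  · intro p; have := hpre p
    rw [C.restrict_PRE] at this
    rwa [congrFun (C.MkEq s) p]
  · intro p
    have := congrFun hfir p
    rw [congrFun (C.MkEq s') p, congrFun (C.MkEq s) p]
    simpa [PTNet.fire, C.restrict_PRE, C.restrict_POST, Mk3] using this

/-- h3 backward: any enabled step over `T` is a transition of `X`. -/
lemma SOLVE {s : S} {γ : Multiset A} (hlab : ∀ a ∈ γ, a ∈ C.X.T)
    (hpre : ∀ p, C.N.PRE γ p ≤ C.Mk s p) :
    ∃ s', C.X.tr s γ s' := by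
  have hen : (C.N.restrict C.X.T).Enabled (C.Mk3 s) γ := by
    refine ⟨fun a ha => Finset.mem_inter.2 ⟨?_, hlab a ha⟩, fun p => ?_⟩
    · exact C.hT ▸ C.T_sub_revT (hlab a ha)
    · rw [C.restrict_PRE, ← congrFun (C.MkEq s) p]; exact hpre p
  have hen' : (C.N.restrict C.X.T).Enabled (C.ψ3 s).1 γ := hen
  set tgt : {M : Fin C.n → ℕ // (C.N.restrict C.X.T).Reach M} :=
    ⟨(C.N.restrict C.X.T).fire (C.ψ3 s).1 γ, PTNet.Reach.step (C.ψ3 s).2 hen'⟩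
  refine ⟨C.ψ3.symm tgt, ?_⟩
  rw [C.hψ3tr]
  refine ⟨hen', ?_⟩
  rw [C.ψ3.apply_symm_apply]

end Aux15

namespace Aux15

variable {S A : Type*} [DecidableEq A] (C : Aux15 S A)

/-- Decomposition of a mixrev transition with a forward singleton label. -/
lemma mixrev_single_fwd {u v : S} {a : A} (ha : a ∈ C.X.T)
    (h : (C.X.mixrevSTS C.bar).tr u {a} v) : C.X.tr u {a} v := by
  obtain ⟨s, α, β, hγ, _, hαu, hβv⟩ := h
  have hαT : ∀ b ∈ α, b ∈ C.X.T := fun b hb => C.hLab s α u hαu b hb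
  have hα0 : α = 0 := by
    by_contra hne
    obtain ⟨b, hb⟩ := Multiset.exists_mem_of_ne_zero hne
    have hmem : C.bar b ∈ Multiset.map C.bar α + β :=
      Multiset.mem_add.2 (Or.inl (Multiset.mem_map_of_mem _ hb))
    rw [← hγ] at hmem
    have : C.bar b = a := Multiset.mem_singleton.1 hmem
    exact C.hg.2 b (hαT b hb) (this ▸ ha)
  subst hα0
  simp only [Multiset.map_zero, zero_add] at hγ
  subst hγ
  have := C.zero_det hαu
  subst this
  exact hβv

/-- Decomposition of a mixrev transition with a reversed singleton label. -/
lemma mixrev_single_bwd {u v : S} {a : A} (ha : a ∈ C.X.T)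
    (h : (C.X.mixrevSTS C.bar).tr u {C.bar a} v) :
    ∃ s, C.X.tr s {a} u := by
  obtain ⟨s, α, β, hγ, _, hαu, hβv⟩ := h
  have hβT : ∀ b ∈ β, b ∈ C.X.T := fun b hb => C.hLab s β v hβv b hb
  have hαT : ∀ b ∈ α, b ∈ C.X.T := fun b hb => C.hLab s α u hαu b hb
  have hβ0 : β = 0 := by
    by_contra hne
    obtain ⟨b, hb⟩ := Multiset.exists_mem_of_ne_zero hne
    have hmem : b ∈ Multiset.map C.bar α + β := Multiset.mem_add.2 (Or.inr hb)
    rw [← hγ] at hmem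
    have hba : b = C.bar a := Multiset.mem_singleton.1 hmem
    exact C.hg.2 a ha (hba ▸ hβT b hb)
  subst hβ0
  rw [add_zero] at hγ
  have hcard : Multiset.card α = 1 := by
    have := congrArg Multiset.card hγ
    simpa using this.symm
  obtain ⟨t, rfl⟩ := Multiset.card_eq_one.1 hcard
  simp only [Multiset.map_singleton] at hγ
  have hbt : C.bar t = C.bar a := (Multiset.singleton_inj.1 hγ.symm)
  have ht : t ∈ C.X.T := hαT t (Multiset.mem_singleton_self t)
  have : t = a := C.hg.1 (Finset.mem_coe.2 ht) (Finset.mem_coe.2 ha) hbt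
  subst this
  exact ⟨s, hαu⟩

/-- The two bijections compose to the identity. -/
lemma phi_id (s : S) : C.ψ2 (C.ψ1 s) = s := by
  have h := C.sreach_all s
  induction h with
  | refl =>
    have : C.ψ2 (C.ψ1 ((C.X.spikeR.revSTS C.bar).init)) =
        (C.X.mixrevSTS C.bar).init := by rw [C.hψ1i, C.hψ2i]
    exact this
  | @step t t' α hr htr ih =>
    obtain ⟨htr', hcard⟩ := htr
    interval_cases h : Multiset.card α
    · rw [Multiset.card_eq_zero] at h; subst h
      rwa [C.zero_det htr']
    · rw [Multiset.card_eq_one] at h; obtain ⟨a, rfl⟩ := h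
      have ha : a ∈ C.X.T :=
        C.hLab t {a} t' htr' a (Multiset.mem_singleton_self a)
      have hs : (C.X.spikeR.revSTS C.bar).tr t {a} t' := by
        left; exact ⟨htr', by simp⟩
      have hc := C.hψ1tr t {a} t' hs
      have hm := C.hψ2tr _ {a} _ hc
      rw [ih] at hm
      have hx : C.X.tr t {a} (C.ψ2 (C.ψ1 t')) := C.mixrev_single_fwd ha hm
      exact C.det hx htr'

/-- KEY: if `ā` is enabled at `Mk u` in `N`, then `u` has an `a`-predecessor. -/
lemma key {u : S} {a : A} (ha : a ∈ C.X.T)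
    (hpre : ∀ p, C.N.pre p (C.bar a) ≤ C.Mk u p) :
    ∃ t, C.X.tr t {a} u := by
  have hen : C.N.Enabled (C.ψ1 u).1 {C.bar a} := by
    refine ⟨fun x hx => ?_, fun p => ?_⟩
    · rw [Multiset.mem_singleton] at hx; subst hx
      exact C.hT ▸ C.bar_mem_revT ha
    · rw [C.PRE_singleton]; exact hpre p
  set tgt : {M : Fin C.n → ℕ // C.N.Reach M} :=
    ⟨C.N.fire (C.ψ1 u).1 {C.bar a}, PTNet.Reach.step (C.ψ1 u).2 hen⟩
  have hc : (CRG C.N).tr (C.ψ1 u) {C.bar a} tgt := ⟨hen, rfl⟩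
  have hm := C.hψ2tr _ {C.bar a} _ hc
  rw [C.phi_id u] at hm
  exact C.mixrev_single_bwd ha hm

/-- Spike reverses are enabled (via h1). -/
lemma spk {y z : S} {a : A} {k : ℕ} (h : C.X.tr y (Multiset.replicate k a) z) :
    ∀ p, k * C.N.pre p (C.bar a) ≤ C.Mk z p := by
  have hs : (C.X.spikeR.revSTS C.bar).tr z
      (Multiset.map C.bar (Multiset.replicate k a)) y := by
    right
    refine ⟨Multiset.replicate k a, rfl, h, ?_⟩
    cases k with
    | zero => simp
    | succ m =>
      rw [Multiset.toFinset_replicate]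
      split <;> simp
  have hc := C.hψ1tr _ _ _ hs
  obtain ⟨⟨_, hpre⟩, _⟩ := hc
  intro p
  have := hpre p
  simpa [PTNet.PRE, Multiset.map_replicate, Multiset.sum_replicate, mul_comm, Mk] using this

/-- Reverse singleton fire equation (via h1), for occurring actions. -/
lemma rev_single_fire {t t' : S} {a : A} (h : C.X.tr t {a} t') :
    (∀ p, C.N.pre p (C.bar a) ≤ C.Mk t' p) ∧
      ∀ p, C.Mk t p = C.Mk t' p - C.N.pre p (C.bar a) + C.N.post (C.bar a) p := by
  have hs : (C.X.spikeR.revSTS C.bar).tr t' {C.bar a} t := by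
    right
    refine ⟨{a}, by simp, h, by simp⟩
  have hc := C.hψ1tr _ _ _ hs
  obtain ⟨⟨_, hpre⟩, hfir⟩ := hc
  constructor
  · intro p; have := hpre p; rwa [C.PRE_singleton] at this
  · intro p
    have := congrFun hfir p
    simpa [PTNet.fire, C.PRE_singleton, C.POST_singleton, Mk] using this

/-- Effect relation for occurring actions: `eff(ā) = −eff(a)` on every place. -/
lemma effrel {t t' : S} {a : A} (h : C.X.tr t {a} t') (p : Fin C.n) :
    (C.N.post (C.bar a) p : ℤ) - C.N.pre p (C.bar a) =
      (C.N.pre p a : ℤ) - C.N.post a p := by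
  obtain ⟨hf1, hf2⟩ := C.single_fire_Mk h
  obtain ⟨hr1, hr2⟩ := C.rev_single_fire h
  have e1 := hf1 p; have e2 := hf2 p; have e3 := hr1 p; have e4 := hr2 p
  omega

end Aux15

namespace Aux15

variable {S A : Type*} [DecidableEq A] (C : Aux15 S A)

/-- Inverse of `bar` on the image of `T`. -/
noncomputable def inv (x : A) : A :=
  if h : ∃ a, a ∈ C.X.T ∧ C.bar a = x then h.choose else x

lemma inv_bar {a : A} (ha : a ∈ C.X.T) : C.inv (C.bar a) = a := by
  have h : ∃ b, b ∈ C.X.T ∧ C.bar b = C.bar a := ⟨a, ha, rfl⟩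
  rw [inv, dif_pos h]
  obtain ⟨hb1, hb2⟩ := h.choose_spec
  exact C.hg.1 (Finset.mem_coe.2 hb1) (Finset.mem_coe.2 ha) hb2

lemma inv_spec {x : A} (hx : x ∈ C.X.revT C.bar) (hnx : x ∉ C.X.T) :
    C.inv x ∈ C.X.T ∧ C.bar (C.inv x) = x := by
  rcases Finset.mem_union.1 hx with h | h
  · exact absurd h hnx
  · obtain ⟨a, ha, rfl⟩ := Finset.mem_image.1 h
    rw [C.inv_bar ha]; exact ⟨ha, rfl⟩

/-- The effect of an action on a place of `N`. -/
def effp (x : A) (p : Fin C.n) : ℤ := (C.N.post x p : ℤ) - C.N.pre p x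

/-- Positive part of the effect. -/
def Wp (p : Fin C.n) (b : A) : ℕ := (C.effp b p).toNat

/-- Negative part of the effect. -/
def Fp (p : Fin C.n) (b : A) : ℕ := (-(C.effp b p)).toNat

lemma Wp_le_post (p : Fin C.n) (b : A) : C.Wp p b ≤ C.N.post b p := by
  unfold Wp effp; omega

lemma Fp_le_pre (p : Fin C.n) (b : A) : C.Fp p b ≤ C.N.pre p b := by
  unfold Fp effp; omega

lemma W_sub_F (p : Fin C.n) (b : A) :
    (C.Wp p b : ℤ) - C.Fp p b = C.effp b p := by
  unfold Wp Fp; omega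

/-- The place set of the solving net. -/
def Plc : Type _ := Fin C.n ⊕ (Fin C.n × {a : A // a ∈ C.X.T})

instance : Fintype C.Plc := by unfold Plc; infer_instance
instance : DecidableEq C.Plc := by unfold Plc; exact inferInstance

/-- Underlying `N`-place of a place of the solving net. -/
def basePlc : C.Plc → Fin C.n := Sum.elim id Prod.fst

/-- Pre-weights of the solving net. -/
noncomputable def preQ : C.Plc → A → ℕ
  | Sum.inl p => fun x => if x ∈ C.X.T then C.N.pre p x else C.N.post (C.inv x) p
  | Sum.inr (p, a) => fun x =>
      if x = C.bar a.1 then C.N.pre p (C.bar a.1)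
      else if x ∈ C.X.T then C.Fp p x else C.Wp p (C.inv x)

/-- Post-weights of the solving net. -/
noncomputable def postQ : C.Plc → A → ℕ
  | Sum.inl p => fun x => if x ∈ C.X.T then C.N.post x p else C.N.pre p (C.inv x)
  | Sum.inr (p, a) => fun x =>
      if x = C.bar a.1 then C.N.post (C.bar a.1) p
      else if x ∈ C.X.T then C.Wp p x else C.Fp p (C.inv x)

/-- Marking of states in the solving net. -/
def muQ (s : S) (q : C.Plc) : ℕ := C.Mk s (C.basePlc q)

noncomputable def PREQ (q : C.Plc) (γ : Multiset A) : ℕ := (γ.map (C.preQ q)).sum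
noncomputable def POSTQ (q : C.Plc) (γ : Multiset A) : ℕ := (γ.map (C.postQ q)).sum

lemma preQ_inl_T {p : Fin C.n} {b : A} (hb : b ∈ C.X.T) :
    C.preQ (Sum.inl p) b = C.N.pre p b := by simp [preQ, hb]

lemma preQ_inl_bar {p : Fin C.n} {b : A} (hb : b ∈ C.X.T) :
    C.preQ (Sum.inl p) (C.bar b) = C.N.post b p := by
  simp [preQ, C.hg.2 b hb, C.inv_bar hb]

lemma postQ_inl_T {p : Fin C.n} {b : A} (hb : b ∈ C.X.T) :
    C.postQ (Sum.inl p) b = C.N.post b p := by simp [postQ, hb]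

lemma postQ_inl_bar {p : Fin C.n} {b : A} (hb : b ∈ C.X.T) :
    C.postQ (Sum.inl p) (C.bar b) = C.N.pre p b := by
  simp [postQ, C.hg.2 b hb, C.inv_bar hb]

lemma preQ_inr_T {p : Fin C.n} {a : {a : A // a ∈ C.X.T}} {b : A} (hb : b ∈ C.X.T) :
    C.preQ (Sum.inr (p, a)) b = C.Fp p b := by
  have : b ≠ C.bar a.1 := fun h => C.hg.2 a.1 a.2 (h ▸ hb)
  simp [preQ, this, hb]

lemma preQ_inr_bar {p : Fin C.n} {a : {a : A // a ∈ C.X.T}} {b : A} (hb : b ∈ C.X.T) :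
    C.preQ (Sum.inr (p, a)) (C.bar b) =
      if b = a.1 then C.N.pre p (C.bar a.1) else C.Wp p b := by
  by_cases h : b = a.1
  · subst h; simp [preQ]
  · have h1 : C.bar b ≠ C.bar a.1 := fun he =>
      h (C.hg.1 (Finset.mem_coe.2 hb) (Finset.mem_coe.2 a.2) he)
    have h2 : C.bar b ∉ C.X.T := C.hg.2 b hb
    simp [preQ, h1, h2, C.inv_bar hb, h]

lemma postQ_inr_T {p : Fin C.n} {a : {a : A // a ∈ C.X.T}} {b : A} (hb : b ∈ C.X.T) :
    C.postQ (Sum.inr (p, a)) b = C.Wp p b := by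
  have : b ≠ C.bar a.1 := fun h => C.hg.2 a.1 a.2 (h ▸ hb)
  simp [postQ, this, hb]

lemma postQ_inr_bar {p : Fin C.n} {a : {a : A // a ∈ C.X.T}} {b : A} (hb : b ∈ C.X.T) :
    C.postQ (Sum.inr (p, a)) (C.bar b) =
      if b = a.1 then C.N.post (C.bar a.1) p else C.Fp p b := by
  by_cases h : b = a.1
  · subst h; simp [postQ]
  · have h1 : C.bar b ≠ C.bar a.1 := fun he =>
      h (C.hg.1 (Finset.mem_coe.2 hb) (Finset.mem_coe.2 a.2) he)
    have h2 : C.bar b ∉ C.X.T := C.hg.2 b hb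
    simp [postQ, h1, h2, C.inv_bar hb, h]

end Aux15

/-- Sum of an if-then-else map splits by count and filter. -/
lemma sum_ite_split {A : Type*} [DecidableEq A] (m : Multiset A) (a : A)
    (c : ℕ) (g : A → ℕ) :
    (m.map fun b => if b = a then c else g b).sum =
      m.count a * c + ((m.filter (· ≠ a)).map g).sum := by
  induction m using Multiset.induction with
  | empty => simp
  | cons b m ih =>
    rcases eq_or_ne b a with rfl | hb
    · simp only [Multiset.map_cons, Multiset.sum_cons, if_pos rfl,
        Multiset.count_cons_self, Multiset.filter_cons, ne_eq, not_true_eq_false,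
        ite_false, zero_add, ih, if_true]
      ring
    · rw [Multiset.count_cons_of_ne (Ne.symm hb)]
      simp only [Multiset.map_cons, Multiset.sum_cons, if_neg hb,
        Multiset.filter_cons, ne_eq, hb, not_false_eq_true, ite_true,
        Multiset.singleton_add, ih, if_false]
      ring

namespace Aux15

variable {S A : Type*} [DecidableEq A] (C : Aux15 S A)

lemma PREQ_inl (p : Fin C.n) {α β : Multiset A} (hα : ∀ b ∈ α, b ∈ C.X.T)
    (hβ : ∀ b ∈ β, b ∈ C.X.T) :
    C.PREQ (Sum.inl p) (Multiset.map C.bar α + β) = C.N.POST α p + C.N.PRE β p := by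
  unfold PREQ
  rw [Multiset.map_add, Multiset.sum_add, Multiset.map_map]
  congr 1
  · exact congrArg Multiset.sum
      (Multiset.map_congr rfl (fun b hb => C.preQ_inl_bar (hα b hb)))
  · exact congrArg Multiset.sum
      (Multiset.map_congr rfl (fun b hb => C.preQ_inl_T (hβ b hb)))

lemma POSTQ_inl (p : Fin C.n) {α β : Multiset A} (hα : ∀ b ∈ α, b ∈ C.X.T)
    (hβ : ∀ b ∈ β, b ∈ C.X.T) :
    C.POSTQ (Sum.inl p) (Multiset.map C.bar α + β) = C.N.PRE α p + C.N.POST β p := by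
  unfold POSTQ
  rw [Multiset.map_add, Multiset.sum_add, Multiset.map_map]
  congr 1
  · exact congrArg Multiset.sum
      (Multiset.map_congr rfl (fun b hb => C.postQ_inl_bar (hα b hb)))
  · exact congrArg Multiset.sum
      (Multiset.map_congr rfl (fun b hb => C.postQ_inl_T (hβ b hb)))

lemma PREQ_inr (p : Fin C.n) (a : {a : A // a ∈ C.X.T}) {α β : Multiset A}
    (hα : ∀ b ∈ α, b ∈ C.X.T) (hβ : ∀ b ∈ β, b ∈ C.X.T) :
    C.PREQ (Sum.inr (p, a)) (Multiset.map C.bar α + β) =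
      α.count a.1 * C.N.pre p (C.bar a.1) +
        ((α.filter (· ≠ a.1)).map (C.Wp p)).sum + (β.map (C.Fp p)).sum := by
  unfold PREQ
  rw [Multiset.map_add, Multiset.sum_add, Multiset.map_map]
  have h1 : (α.map (C.preQ (Sum.inr (p, a)) ∘ C.bar)).sum =
      α.count a.1 * C.N.pre p (C.bar a.1) + ((α.filter (· ≠ a.1)).map (C.Wp p)).sum := by
    rw [Multiset.map_congr rfl
      (fun b hb => show (C.preQ (Sum.inr (p, a)) ∘ C.bar) b =
        if b = a.1 then C.N.pre p (C.bar a.1) else C.Wp p b from C.preQ_inr_bar (hα b hb))]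
    exact sum_ite_split α a.1 _ _
  have h2 : (β.map (C.preQ (Sum.inr (p, a)))).sum = (β.map (C.Fp p)).sum :=
    congrArg Multiset.sum (Multiset.map_congr rfl (fun b hb => C.preQ_inr_T (hβ b hb)))
  rw [h1, h2, add_assoc]

lemma POSTQ_inr (p : Fin C.n) (a : {a : A // a ∈ C.X.T}) {α β : Multiset A}
    (hα : ∀ b ∈ α, b ∈ C.X.T) (hβ : ∀ b ∈ β, b ∈ C.X.T) :
    C.POSTQ (Sum.inr (p, a)) (Multiset.map C.bar α + β) =
      α.count a.1 * C.N.post (C.bar a.1) p +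
        ((α.filter (· ≠ a.1)).map (C.Fp p)).sum + (β.map (C.Wp p)).sum := by
  unfold POSTQ
  rw [Multiset.map_add, Multiset.sum_add, Multiset.map_map]
  have h1 : (α.map (C.postQ (Sum.inr (p, a)) ∘ C.bar)).sum =
      α.count a.1 * C.N.post (C.bar a.1) p + ((α.filter (· ≠ a.1)).map (C.Fp p)).sum := by
    rw [Multiset.map_congr rfl
      (fun b hb => show (C.postQ (Sum.inr (p, a)) ∘ C.bar) b =
        if b = a.1 then C.N.post (C.bar a.1) p else C.Fp p b from C.postQ_inr_bar (hα b hb))]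
    exact sum_ite_split α a.1 _ _
  have h2 : (β.map (C.postQ (Sum.inr (p, a)))).sum = (β.map (C.Wp p)).sum :=
    congrArg Multiset.sum (Multiset.map_congr rfl (fun b hb => C.postQ_inr_T (hβ b hb)))
  rw [h1, h2, add_assoc]

/-- Total effect of a multiset on a place of `N`. -/
def effsum (γ : Multiset A) (p : Fin C.n) : ℤ := (γ.map fun b => C.effp b p).sum

lemma effsum_zero (p : Fin C.n) : C.effsum 0 p = 0 := by simp [effsum]

lemma effsum_cons (b : A) (γ : Multiset A) (p : Fin C.n) :
    C.effsum (b ::ₘ γ) p = C.effp b p + C.effsum γ p := by simp [effsum]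

lemma effsum_add (γ δ : Multiset A) (p : Fin C.n) :
    C.effsum (γ + δ) p = C.effsum γ p + C.effsum δ p := by simp [effsum]

lemma effsum_eq (γ : Multiset A) (p : Fin C.n) :
    C.effsum γ p = (C.N.POST γ p : ℤ) - C.N.PRE γ p := by
  induction γ using Multiset.induction with
  | empty => simp [effsum, PTNet.PRE, PTNet.POST]
  | cons b γ ih =>
    rw [C.effsum_cons]
    simp only [PTNet.PRE, PTNet.POST, Multiset.map_cons, Multiset.sum_cons] at *
    push_cast
    rw [ih]; unfold effp; push_cast; ring

lemma sum_W_sub_sum_F (m : Multiset A) (p : Fin C.n) :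
    ((m.map (C.Wp p)).sum : ℤ) - (m.map (C.Fp p)).sum = C.effsum m p := by
  induction m using Multiset.induction with
  | empty => simp [effsum]
  | cons b m ih =>
    rw [C.effsum_cons]
    simp only [Multiset.map_cons, Multiset.sum_cons, Nat.cast_add]
    have := C.W_sub_F p b
    omega

lemma effsum_replicate (k : ℕ) (a : A) (p : Fin C.n) :
    C.effsum (Multiset.replicate k a) p = k * C.effp a p := by
  simp [effsum, Multiset.map_replicate, Multiset.sum_replicate]

/-- The effect of the negative-part filter. -/
lemma effsum_filter_neg (m : Multiset A) (p : Fin C.n) :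
    C.effsum (m.filter fun b => C.effp b p < 0) p = -((m.map (C.Fp p)).sum : ℤ) := by
  induction m using Multiset.induction with
  | empty => simp [effsum]
  | cons b m ih =>
    rw [Multiset.filter_cons]
    by_cases h : C.effp b p < 0
    · rw [if_pos h]
      simp only [Multiset.singleton_add, Multiset.map_cons, Multiset.sum_cons,
        Nat.cast_add]
      rw [C.effsum_cons]
      have hF : (C.Fp p b : ℤ) = -(C.effp b p) := by unfold Fp; omega
      omega
    · rw [if_neg h]
      simp only [Multiset.map_cons, Multiset.sum_cons, Nat.cast_add, zero_add]
      have hF : (C.Fp p b : ℤ) = 0 := by unfold Fp effp at *; omega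
      omega

end Aux15

namespace Aux15

variable {S A : Type*} [DecidableEq A] (C : Aux15 S A)

lemma PRE_replicate (k : ℕ) (a : A) (p : Fin C.n) :
    C.N.PRE (Multiset.replicate k a) p = k * C.N.pre p a := by
  simp [PTNet.PRE, Multiset.map_replicate, Multiset.sum_replicate, smul_eq_mul]

lemma POST_replicate (k : ℕ) (a : A) (p : Fin C.n) :
    C.N.POST (Multiset.replicate k a) p = k * C.N.post a p := by
  simp [PTNet.POST, Multiset.map_replicate, Multiset.sum_replicate, smul_eq_mul]

lemma muQ_inl (s : S) (p : Fin C.n) : C.muQ s (Sum.inl p) = C.Mk s p := rfl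

lemma muQ_inr (s : S) (p : Fin C.n) (a : {a : A // a ∈ C.X.T}) :
    C.muQ s (Sum.inr (p, a)) = C.Mk s p := rfl

/-- Main forward lemma: mixrev transitions are enabled in the solving net and
fire correctly. -/
lemma fwd_main {s u v w : S} {α β : Multiset A}
    (hw : C.X.tr s (α + β) w) (hαu : C.X.tr s α u) (hβv : C.X.tr s β v)
    (q : C.Plc) :
    C.PREQ q (Multiset.map C.bar α + β) ≤ C.muQ u q ∧
      (C.muQ v q : ℤ) = (C.muQ u q : ℤ) - C.PREQ q (Multiset.map C.bar α + β)
        + C.POSTQ q (Multiset.map C.bar α + β) := by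
  obtain ⟨hαT, hpreα, hmequ⟩ := C.FWD hαu
  obtain ⟨hβT, hpreβ, hmeqv⟩ := C.FWD hβv
  obtain ⟨-, hpreαβ, -⟩ := C.FWD hw
  cases q with
  | inl p =>
    rw [C.PREQ_inl p hαT hβT, C.POSTQ_inl p hαT hβT, C.muQ_inl, C.muQ_inl]
    have h1 := hpreα p; have h2 := hpreβ p; have h3 := hmequ p
    have h4 := hmeqv p
    have h5 := hpreαβ p; rw [C.PRE_add] at h5
    constructor
    · omega
    · omega
  | inr pa =>
    obtain ⟨p, a⟩ := pa
    rw [C.PREQ_inr p a hαT hβT, C.POSTQ_inr p a hαT hβT, C.muQ_inr, C.muQ_inr]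
    set k := α.count a.1 with hk
    have hαdec : α = Multiset.replicate k a.1 + α.filter (· ≠ a.1) := by
      ext x
      rw [Multiset.count_add, Multiset.count_replicate, Multiset.count_filter]
      by_cases hx : x = a.1
      · subst hx; simp [hk]
      · simp [hx, eq_comm]
    set α₀ := α.filter (· ≠ a.1) with hα₀
    set δ := (α₀ + β).filter (fun b => C.effp b p < 0) with hδ
    have hδle : δ ≤ α₀ + β := Multiset.filter_le _ _
    obtain ⟨ρ, hρ⟩ := Multiset.le_iff_exists_add.1 hδle
    have htot : α + β = δ + (Multiset.replicate k a.1 + ρ) := by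
      calc α + β = (Multiset.replicate k a.1 + α₀) + β := by rw [← hαdec]
        _ = Multiset.replicate k a.1 + (α₀ + β) := by rw [add_assoc]
        _ = Multiset.replicate k a.1 + (δ + ρ) := by rw [← hρ]
        _ = δ + (Multiset.replicate k a.1 + ρ) := by rw [add_left_comm]
    rw [htot] at hw
    obtain ⟨y, hsy, hyw⟩ := C.split hw
    obtain ⟨z, hyz, -⟩ := C.split hyw
    have hspk := C.spk hyz p
    obtain ⟨-, hpreδ, hmeqy⟩ := C.FWD hsy
    obtain ⟨-, hprerep, hmeqz⟩ := C.FWD hyz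
    have f2a := hprerep p; rw [C.PRE_replicate] at f2a
    have f2b := hmeqz p; rw [C.PRE_replicate, C.POST_replicate] at f2b
    have f3a := hpreδ p; have f3b := hmeqy p
    have f4 : (C.N.POST δ p : ℤ) - C.N.PRE δ p =
        -(((α₀.map (C.Fp p)).sum : ℤ) + ((β.map (C.Fp p)).sum : ℤ)) := by
      have h := C.effsum_filter_neg (α₀ + β) p
      rw [← hδ, C.effsum_eq, Multiset.map_add, Multiset.sum_add] at h
      push_cast at h ⊢
      omega
    have f5a := hpreα p; have f5b := hmequ p
    have f6 : C.N.PRE α p = k * C.N.pre p a.1 + C.N.PRE α₀ p := by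
      conv_lhs => rw [hαdec]
      rw [C.PRE_add, C.PRE_replicate]
    have f7 : C.N.POST α p = k * C.N.post a.1 p + C.N.POST α₀ p := by
      conv_lhs => rw [hαdec]
      rw [C.POST_add, C.POST_replicate]
    rw [f6, f7] at f5b
    rw [f6] at f5a
    have f8a : ((α₀.map (C.Wp p)).sum : ℤ) - ((α₀.map (C.Fp p)).sum : ℤ) =
        (C.N.POST α₀ p : ℤ) - C.N.PRE α₀ p := by
      rw [C.sum_W_sub_sum_F, C.effsum_eq]
    have f8b : ((β.map (C.Wp p)).sum : ℤ) - ((β.map (C.Fp p)).sum : ℤ) =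
        (C.N.POST β p : ℤ) - C.N.PRE β p := by
      rw [C.sum_W_sub_sum_F, C.effsum_eq]
    have f9a := hpreβ p; have f9b := hmeqv p
    have hker : (↑(k * C.N.pre p (C.bar a.1)) : ℤ) - ↑(k * C.N.post (C.bar a.1) p)
        = (↑(k * C.N.post a.1 p) : ℤ) - ↑(k * C.N.pre p a.1) := by
      rcases Nat.eq_zero_or_pos k with hk0 | hkpos
      · simp [hk0]
      · have ha_mem : a.1 ∈ α := Multiset.count_pos.1 (hk ▸ hkpos)
        obtain ⟨t, t', htt'⟩ := C.occurs hαu a.1 ha_mem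
        have er := C.effrel htt' p
        push_cast
        linear_combination (-(k : ℤ)) * er
    set K0 := k * C.N.pre p (C.bar a.1) with hK0
    set K1 := k * C.N.pre p a.1 with hK1
    set K2 := k * C.N.post a.1 p with hK2
    set K3 := k * C.N.post (C.bar a.1) p with hK3
    constructor
    · omega
    · omega

end Aux15

namespace Aux15

variable {S A : Type*} [DecidableEq A] (C : Aux15 S A)

lemma POST_cons (a : A) (γ : Multiset A) (p : Fin C.n) :
    C.N.POST (a ::ₘ γ) p = C.N.post a p + C.N.POST γ p := by
  simp [PTNet.POST]

lemma PRE_cons (a : A) (γ : Multiset A) (p : Fin C.n) :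
    C.N.PRE (a ::ₘ γ) p = C.N.pre p a + C.N.PRE γ p := by
  simp [PTNet.PRE]

/-- Peeling induction: a multiset satisfying the strict and variant
constraints at `u` can be reversed from `u`. -/
lemma revall (α : Multiset A) : (∀ b ∈ α, b ∈ C.X.T) → ∀ u : S,
    (∀ p, C.N.POST α p ≤ C.Mk u p) →
    (∀ (p : Fin C.n) (a : A), a ∈ C.X.T →
      α.count a * C.N.pre p (C.bar a) +
        ((α.filter (· ≠ a)).map (C.Wp p)).sum ≤ C.Mk u p) →
    ∃ s : S, ∀ p, (C.Mk s p : ℤ) = (C.Mk u p : ℤ) - C.effsum α p := by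
  induction α using Multiset.induction with
  | empty =>
    intro _ u _ _
    exact ⟨u, fun p => by rw [C.effsum_zero]; ring⟩
  | cons a α₀ ih =>
    intro hT u hstrict hvar
    have haT : a ∈ C.X.T := hT a (Multiset.mem_cons_self a α₀)
    -- ā is enabled at `Mk u` in `N`
    have hpre_a : ∀ p, C.N.pre p (C.bar a) ≤ C.Mk u p := by
      intro p
      have h := hvar p a haT
      have hpos : 0 < (a ::ₘ α₀).count a := by simp
      calc C.N.pre p (C.bar a) ≤ (a ::ₘ α₀).count a * C.N.pre p (C.bar a) :=
            Nat.le_mul_of_pos_left _ hpos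
        _ ≤ _ := Nat.le_add_right _ _
        _ ≤ C.Mk u p := h
    obtain ⟨t, htu⟩ := C.key haT hpre_a
    obtain ⟨-, hpret, hmequ⟩ := C.FWD htu
    have er := fun p => C.effrel htu p
    -- constraints persist at t
    have hstrict' : ∀ p, C.N.POST α₀ p ≤ C.Mk t p := by
      intro p
      have h := hstrict p
      rw [C.POST_cons] at h
      have h2 := hmequ p; rw [C.PRE_singleton, C.POST_singleton] at h2
      have h3 := hpret p; rw [C.PRE_singleton] at h3
      omega
    have hvar' : ∀ (p : Fin C.n) (a' : A), a' ∈ C.X.T →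
        α₀.count a' * C.N.pre p (C.bar a') +
          ((α₀.filter (· ≠ a')).map (C.Wp p)).sum ≤ C.Mk t p := by
      intro p a' ha'
      have h2 := hmequ p; rw [C.PRE_singleton, C.POST_singleton] at h2
      have h3 := hpret p; rw [C.PRE_singleton] at h3
      rcases eq_or_ne a' a with rfl | hne
      · have h := hvar p a' ha'
        rw [Multiset.count_cons_self, Nat.succ_mul,
          Multiset.filter_cons_of_neg _ (by simp)] at h
        have her := er p
        have hpost : (0 : ℤ) ≤ C.N.post (C.bar a') p := by positivity
        set K := α₀.count a' * C.N.pre p (C.bar a') with hK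
        omega
      · have h := hvar p a' ha'
        rw [Multiset.count_cons_of_ne hne,
          Multiset.filter_cons_of_pos _ (by simpa using hne.symm),
          Multiset.map_cons, Multiset.sum_cons] at h
        have hW : (C.effp a p : ℤ) ≤ C.Wp p a := by unfold Wp; omega
        have heff : C.effp a p = (C.N.post a p : ℤ) - C.N.pre p a := rfl
        set K := α₀.count a' * C.N.pre p (C.bar a') with hK
        omega
    obtain ⟨s, hs⟩ := ih (fun b hb => hT b (Multiset.mem_cons_of_mem hb)) t
      hstrict' hvar'
    refine ⟨s, fun p => ?_⟩
    have h1 := hs p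
    have h2 := hmequ p; rw [C.PRE_singleton, C.POST_singleton] at h2
    have h3 := hpret p; rw [C.PRE_singleton] at h3
    rw [C.effsum_cons]
    have heff : C.effp a p = (C.N.post a p : ℤ) - C.N.pre p a := rfl
    omega

/-- Backward lemma: any step enabled at `muQ u` in the solving net comes
from a mixrev transition. -/
lemma bwd {u : S} {γ : Multiset A} (hlab : ∀ x ∈ γ, x ∈ C.X.revT C.bar)
    (hpre : ∀ q, C.PREQ q γ ≤ C.muQ u q) :
    ∃ (s v w : S) (α β : Multiset A), γ = Multiset.map C.bar α + β ∧
      C.X.tr s (α + β) w ∧ C.X.tr s α u ∧ C.X.tr s β v := by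
  classical
  set β := γ.filter (· ∈ C.X.T) with hβdef
  set γb := γ.filter (fun x => ¬ x ∈ C.X.T) with hγbdef
  have hsplit : γ = γb + β := by
    rw [hβdef, hγbdef, add_comm]
    exact (Multiset.filter_add_not _ γ).symm
  set α := γb.map C.inv with hαdef
  have hγbmem : ∀ x ∈ γb, x ∈ C.X.revT C.bar ∧ x ∉ C.X.T := by
    intro x hx
    rw [hγbdef] at hx
    exact ⟨hlab x (Multiset.mem_of_mem_filter hx), (Multiset.mem_filter.1 hx).2⟩
  have hbar : Multiset.map C.bar α = γb := by
    rw [hαdef, Multiset.map_map]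
    conv_rhs => rw [← Multiset.map_id γb]
    exact Multiset.map_congr rfl fun x hx =>
      (C.inv_spec (hγbmem x hx).1 (hγbmem x hx).2).2
  have hαT : ∀ b ∈ α, b ∈ C.X.T := by
    intro b hb
    obtain ⟨x, hx, rfl⟩ := Multiset.mem_map.1 (hαdef ▸ hb)
    exact (C.inv_spec (hγbmem x hx).1 (hγbmem x hx).2).1
  have hβT : ∀ b ∈ β, b ∈ C.X.T := by
    intro b hb
    rw [hβdef] at hb
    exact (Multiset.mem_filter.1 hb).2
  have hγ : γ = Multiset.map C.bar α + β := by rw [hbar, ← hsplit]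
  have hstrict : ∀ p, C.N.POST α p + C.N.PRE β p ≤ C.Mk u p := by
    intro p
    have h := hpre (Sum.inl p)
    rwa [hγ, C.PREQ_inl p hαT hβT, C.muQ_inl] at h
  have hvar : ∀ (p : Fin C.n) (a : A), a ∈ C.X.T →
      α.count a * C.N.pre p (C.bar a) +
        ((α.filter (· ≠ a)).map (C.Wp p)).sum ≤ C.Mk u p := by
    intro p a ha
    have h := hpre (Sum.inr (p, ⟨a, ha⟩))
    rw [hγ, C.PREQ_inr p ⟨a, ha⟩ hαT hβT, C.muQ_inr] at h
    have h' : α.count a * C.N.pre p (C.bar a) +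
        ((α.filter (· ≠ a)).map (C.Wp p)).sum + (β.map (C.Fp p)).sum ≤ C.Mk u p := h
    omega
  obtain ⟨s, hs⟩ := C.revall α hαT u (fun p => le_trans (Nat.le_add_right _ _)
    (hstrict p)) hvar
  have henab : ∀ p, C.N.PRE (α + β) p ≤ C.Mk s p := by
    intro p
    rw [C.PRE_add]
    have h1 := hs p
    have h2 := hstrict p
    have h3 := C.effsum_eq α p
    omega
  have hlab' : ∀ b ∈ α + β, b ∈ C.X.T := by
    intro b hb
    rcases Multiset.mem_add.1 hb with h | h
    exacts [hαT b h, hβT b h]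
  obtain ⟨w, hsw⟩ := C.SOLVE hlab' henab
  obtain ⟨u₀, hsu₀, -⟩ := C.split hsw
  have hu₀ : u₀ = u := by
    apply C.Mk_inj
    intro p
    obtain ⟨-, hpres, hmeq⟩ := C.FWD hsu₀
    have h1 := hmeq p
    have h2 := hpres p
    have h3 := hs p
    have h4 := C.effsum_eq α p
    omega
  have hsw' : C.X.tr s (β + α) w := by rwa [add_comm]
  obtain ⟨v, hsv, -⟩ := C.split hsw'
  exact ⟨s, v, w, α, β, hγ, hsw, hu₀ ▸ hsu₀, hsv⟩

end Aux15

namespace Aux15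

variable {S A : Type*} [DecidableEq A] (C : Aux15 S A)

/-- Place reindexing. -/
noncomputable def eP : C.Plc ≃ Fin (Fintype.card C.Plc) := Fintype.equivFin _

/-- The solving net. -/
noncomputable def NStar : PTNet (Fin (Fintype.card C.Plc)) A where
  T := C.X.revT C.bar
  pre := fun i x => C.preQ (C.eP.symm i) x
  post := fun x i => C.postQ (C.eP.symm i) x
  M0 := fun i => C.N.M0 (C.basePlc (C.eP.symm i))
  pre_pos := by
    intro x hx
    rcases Finset.mem_union.1 hx with h | h
    · obtain ⟨p, hp⟩ := C.N.pre_pos x (C.hT ▸ C.T_sub_revT h)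
      refine ⟨C.eP (Sum.inl p), ?_⟩
      show 0 < C.preQ (C.eP.symm (C.eP (Sum.inl p))) x
      refine (congrArg (fun q => 0 < C.preQ q x) (C.eP.symm_apply_apply (Sum.inl p))).mpr ?_
      rw [C.preQ_inl_T h]
      exact hp
    · obtain ⟨a, ha, rfl⟩ := Finset.mem_image.1 h
      obtain ⟨p, hp⟩ := C.N.pre_pos (C.bar a) (C.hT ▸ C.bar_mem_revT ha)
      refine ⟨C.eP (Sum.inr (p, ⟨a, ha⟩)), ?_⟩
      show 0 < C.preQ (C.eP.symm (C.eP (Sum.inr (p, ⟨a, ha⟩)))) (C.bar a)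
      refine (congrArg (fun q => 0 < C.preQ q (C.bar a))
        (C.eP.symm_apply_apply (Sum.inr (p, ⟨a, ha⟩)))).mpr ?_
      simpa [preQ] using hp

/-- Marking of states in the solving net (reindexed). -/
noncomputable def muF (s : S) : Fin (Fintype.card C.Plc) → ℕ :=
  fun i => C.muQ s (C.eP.symm i)

lemma NStar_PRE (γ : Multiset A) (i : Fin (Fintype.card C.Plc)) :
    C.NStar.PRE γ i = C.PREQ (C.eP.symm i) γ := rfl

lemma NStar_POST (γ : Multiset A) (i : Fin (Fintype.card C.Plc)) :
    C.NStar.POST γ i = C.POSTQ (C.eP.symm i) γ := rfl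

lemma muF_init : C.muF C.X.init = C.NStar.M0 := by
  funext i
  show C.Mk C.X.init (C.basePlc (C.eP.symm i)) = C.N.M0 (C.basePlc (C.eP.symm i))
  rw [C.Mk_init]

lemma muF_inj {s s' : S} (h : C.muF s = C.muF s') : s = s' := by
  apply C.Mk_inj
  intro p
  have := congrFun h (C.eP (Sum.inl p))
  show C.muQ s (Sum.inl p) = C.muQ s' (Sum.inl p)
  rwa [show C.muQ s (Sum.inl p) = C.muF s (C.eP (Sum.inl p)) by
      rw [muF]; exact congrArg (C.muQ s) (C.eP.symm_apply_apply _).symm,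
    show C.muQ s' (Sum.inl p) = C.muF s' (C.eP (Sum.inl p)) by
      rw [muF]; exact congrArg (C.muQ s') (C.eP.symm_apply_apply _).symm]

/-- Labels of a mixrev step are in `revT`. -/
lemma labels_revT {s u v : S} {α β : Multiset A}
    (hαu : C.X.tr s α u) (hβv : C.X.tr s β v) :
    ∀ x ∈ Multiset.map C.bar α + β, x ∈ C.X.revT C.bar := by
  intro x hx
  rcases Multiset.mem_add.1 hx with h | h
  · obtain ⟨b, hb, rfl⟩ := Multiset.mem_map.1 h
    exact C.bar_mem_revT (C.hLab s α u hαu b hb)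
  · exact C.T_sub_revT (C.hLab s β v hβv x h)

/-- Enabledness and firing of a mixrev transition in the solving net. -/
lemma star_enabled_fire {s u v w : S} {α β : Multiset A}
    (hw : C.X.tr s (α + β) w) (hαu : C.X.tr s α u) (hβv : C.X.tr s β v) :
    C.NStar.Enabled (C.muF u) (Multiset.map C.bar α + β) ∧
      C.muF v = C.NStar.fire (C.muF u) (Multiset.map C.bar α + β) := by
  have hfm := fun q => C.fwd_main hw hαu hβv q
  constructor
  · exact ⟨C.labels_revT hαu hβv, fun i => (hfm (C.eP.symm i)).1⟩
  · funext i
    have h1 := (hfm (C.eP.symm i)).1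
    have h2 := (hfm (C.eP.symm i)).2
    show C.muQ v (C.eP.symm i) = C.NStar.fire (C.muF u) _ i
    unfold PTNet.fire
    rw [C.NStar_PRE, C.NStar_POST]
    have h3 : C.muF u i = C.muQ u (C.eP.symm i) := rfl
    omega

lemma reach_of_tr {s u v w : S} {α β : Multiset A}
    (hw : C.X.tr s (α + β) w) (hαu : C.X.tr s α u) (hβv : C.X.tr s β v)
    (hr : C.NStar.Reach (C.muF u)) : C.NStar.Reach (C.muF v) := by
  obtain ⟨hen, hfire⟩ := C.star_enabled_fire hw hαu hβv
  rw [hfire]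
  exact PTNet.Reach.step hr hen

lemma mu_reach (s : S) : C.NStar.Reach (C.muF s) := by
  have h := C.sreach_all s
  induction h with
  | refl => rw [C.muF_init]; exact PTNet.Reach.init
  | @step t t' γ hr htr ih =>
    obtain ⟨htr', hcard⟩ := htr
    interval_cases h : Multiset.card γ
    · rw [Multiset.card_eq_zero] at h; subst h
      rwa [C.zero_det htr']
    · rw [Multiset.card_eq_one] at h; obtain ⟨a, rfl⟩ := h
      have hw : C.X.tr t ((0 : Multiset A) + {a}) t' := by rwa [zero_add]
      exact C.reach_of_tr hw (C.hEL t) htr' ih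

lemma mu_surj {Mk' : Fin (Fintype.card C.Plc) → ℕ} (h : C.NStar.Reach Mk') :
    ∃ s, C.muF s = Mk' := by
  induction h with
  | init => exact ⟨C.X.init, C.muF_init⟩
  | @step M γ hr hen ih =>
    obtain ⟨s, rfl⟩ := ih
    obtain ⟨hlab, hpres⟩ := hen
    have hpre' : ∀ q, C.PREQ q γ ≤ C.muQ s q := by
      intro q
      have := hpres (C.eP q)
      rwa [C.NStar_PRE, Equiv.symm_apply_apply,
        show C.muF s (C.eP q) = C.muQ s q by rw [muF, Equiv.symm_apply_apply]]
        at this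
    obtain ⟨s₀, v, w, α, β, hγ, hsw, hsu, hsv⟩ := C.bwd hlab hpre'
    refine ⟨v, ?_⟩
    obtain ⟨-, hfire⟩ := C.star_enabled_fire hsw hsu hsv
    rw [hγ, ← hfire]

/-- The state bijection. -/
noncomputable def Phi : S ≃ {M : Fin (Fintype.card C.Plc) → ℕ // C.NStar.Reach M} :=
  Equiv.ofBijective (fun s => ⟨C.muF s, C.mu_reach s⟩)
    ⟨fun s s' h => C.muF_inj (congrArg Subtype.val h),
     fun M => by obtain ⟨s, hs⟩ := C.mu_surj M.2; exact ⟨s, Subtype.ext hs⟩⟩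

lemma Phi_val (s : S) : (C.Phi s).1 = C.muF s := rfl

/-- The main theorem in bundled form. -/
theorem main : STSSolvable (C.X.mixrevSTS C.bar) := by
  refine ⟨Fintype.card C.Plc, C.NStar, C.Phi, ?_, rfl, ?_⟩
  · exact Subtype.ext C.muF_init
  · intro u γ v
    constructor
    · rintro ⟨s, α, β, rfl, ⟨w, hw⟩, hαu, hβv⟩
      obtain ⟨hen, hfire⟩ := C.star_enabled_fire hw hαu hβv
      exact ⟨hen, hfire⟩
    · rintro ⟨⟨hlab, hpres⟩, hfire⟩
      have hpre' : ∀ q, C.PREQ q γ ≤ C.muQ u q := by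
        intro q
        have := hpres (C.eP q)
        rwa [C.NStar_PRE, Equiv.symm_apply_apply,
          show (C.Phi u).1 (C.eP q) = C.muQ u q by
            rw [C.Phi_val, muF, Equiv.symm_apply_apply]] at this
      obtain ⟨s₀, v₀, w, α, β, hγ, hsw, hsu, hsv⟩ := C.bwd hlab hpre'
      obtain ⟨-, hfire'⟩ := C.star_enabled_fire hsw hsu hsv
      have hv : v₀ = v := by
        apply C.muF_inj
        rw [hγ] at hfire
        rw [hfire', ← C.Phi_val u, ← C.Phi_val v, hfire]
      exact ⟨s₀, α, β, hγ, ⟨w, hsw⟩, hsu, hv ▸ hsv⟩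

end Aux15

/-- If some PT-net over `T ⊎ T̄` over-approximates `(TS^spike)^rev`,
under-approximates `TS^mixrev`, and restricts to a solution of `TS`, then
`TS^mixrev` is solvable. -/
theorem stmt15 {S A : Type*} [DecidableEq A] (X : STS S A) (bar : A → A)
    (hX : X.IsCEST) (hg : X.GoodRev bar)
    (n : ℕ) (N : PTNet (Fin n) A) (hT : N.T = X.revT bar)
    (h1 : STS.Incl ((X.spikeR).revSTS bar) (CRG N))
    (h2 : STS.Incl (CRG N) (X.mixrevSTS bar))
    (h3 : STS.IsoSTS X (CRG (N.restrict X.T))) :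
    STSSolvable (X.mixrevSTS bar) := by
  obtain ⟨ψ1, hψ1i, -, hψ1tr⟩ := h1
  obtain ⟨ψ2, hψ2i, -, hψ2tr⟩ := h2
  obtain ⟨ψ3, hψ3i, -, hψ3tr⟩ := h3
  exact Aux15.main ⟨X, bar, n, N, hX, hg, hT, ψ1, hψ1i, hψ1tr, ψ2, hψ2tr, hψ2i,
    ψ3, hψ3i, hψ3tr⟩
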